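/- Let V be a finite-dimensional real vector space, h a symmetric bilinear form on V, l a linear functional on V, and l2 a real number. Suppose P is a symmetric bilinear form on the dual V*, n ∈ V and n2 ∈ ℝ satisfy the hypersurface-data relations: (i) for all covectors ω and vectors X, P(ω, h(X,·)) + ω(n)·l(X) = ω(X); (ii) P(·, l) + l2·(evaluation at n) = 0 as a functional on V*; (iii) l(n) + n2·l2 = 1; (iv) h(n,·) + n2·l = 0 as a functional on V. Then, given Z ∈ V* and W ∈ ℝ, there exists a vector v ∈ V with l(v) = W and h(v,·) = Z if and only if Z(n) + n2·W = 0; moreover, in that case the solution is unique and is given by v = P(Z,·)♯ + W·n, i.e. ω(v) = P(Z, ω) + W·ω(n) for every covector ω. -/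
import Mathlib


/-- Vector reconstruction lemma (Mars 2013, Lemma 2.2), pointwise linear-algebra version. -/
theorem stmt_0
    (V : Type*) [AddCommGroup V] [Module ℝ V] [FiniteDimensional ℝ V]
    (h : V →ₗ[ℝ] V →ₗ[ℝ] ℝ) (hsymm : ∀ X Y : V, h X Y = h Y X)
    (l : Module.Dual ℝ V) (l2 : ℝ)
    (P : Module.Dual ℝ V →ₗ[ℝ] Module.Dual ℝ V →ₗ[ℝ] ℝ)
    (Psymm : ∀ ω χ : Module.Dual ℝ V, P ω χ = P χ ω)
    (n : V) (n2 : ℝ)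
    (c1 : ∀ (ω : Module.Dual ℝ V) (X : V), P ω (h X) + ω n * l X = ω X)
    (c2 : ∀ ω : Module.Dual ℝ V, P ω l + l2 * ω n = 0)
    (c3 : l n + n2 * l2 = 1)
    (c4 : ∀ X : V, h n X + n2 * l X = 0)
    (Z : Module.Dual ℝ V) (W : ℝ) :
    ((∃ v : V, l v = W ∧ h v = Z) ↔ Z n + n2 * W = 0) ∧
    (∀ v : V, l v = W → h v = Z →
      ∀ ω : Module.Dual ℝ V, ω v = P Z ω + W * ω n) ∧
    (∀ v₁ v₂ : V, l v₁ = W → h v₁ = Z → l v₂ = W → h v₂ = Z → v₁ = v₂) := by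
  -- the reconstruction formula for any solution v
  have formula : ∀ v : V, l v = W → h v = Z →
      ∀ ω : Module.Dual ℝ V, ω v = P Z ω + W * ω n := by
    intro v hl hh ω
    have := c1 ω v
    rw [hh, hl] at this
    rw [← this, Psymm]
    ring
  refine ⟨⟨?_, ?_⟩, formula, ?_⟩
  · rintro ⟨v, hl, hh⟩
    have := c4 v
    rw [hsymm n v, hh, hl] at this
    exact this
  · intro hZ
    -- construct v via double dual
    set g : Module.Dual ℝ (Module.Dual ℝ V) := P Z + W • (Module.Dual.eval ℝ V n) with hg
    set v : V := (Module.evalEquiv ℝ V).symm g with hv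
    have hev : ∀ ω : Module.Dual ℝ V, ω v = P Z ω + W * ω n := by
      intro ω
      have : Module.evalEquiv ℝ V v = g := (Module.evalEquiv ℝ V).apply_symm_apply g
      have h2 := congrArg (fun f => f ω) this
      simpa [Module.evalEquiv_apply, Module.Dual.eval_apply, g, smul_eq_mul] using h2
    have hZn : Z n = -(n2 * W) := by linarith
    refine ⟨v, ?_, ?_⟩
    · rw [hev l]
      linear_combination c2 Z - l2 * hZ + W * c3
    · ext X
      rw [hsymm v X, hev (h X)]
      linear_combination c1 Z X + W * hsymm X n + W * c4 X - l X * hZ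
  · intro v₁ v₂ hl1 hh1 hl2 hh2
    apply (Module.evalEquiv ℝ V).injective
    ext ω
    simp only [Module.evalEquiv_apply, Module.Dual.eval_apply]
    rw [formula v₁ hl1 hh1 ω, formula v₂ hl2 hh2 ω]
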